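/- Theorem (main): For every positive integer l, there exist sets A, B ⊆ ℕ with R_A = R_B, A ∪ B = ℕ, and A ∩ B = {(2^{2l}−1) + (2^{2l+1}−1)·k : k ∈ ℕ}, an infinite arithmetic progression properly contained in ℕ. In particular, A ≠ B, the symmetric difference of A and B is infinite, and their intersection is infinite. -/

import Mathlib

/-- Representation function: number of unordered representations of `n`
as `s' + s''` with `s' < s''`, both in `S`. -/
noncomputable def R (S : Set ℕ) (n : ℕ) : ℕ :=
  {p : ℕ × ℕ | p.1 ∈ S ∧ p.2 ∈ S ∧ p.1 < p.2 ∧ p.1 + p.2 = n}.ncard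

/-- Translate of a set: `m + S`. -/
def tr (m : ℕ) (S : Set ℕ) : Set ℕ := (m + ·) '' S

namespace Stmt14

/-- cross representation count -/
noncomputable def cr (S T : Set ℕ) (n : ℕ) : ℕ :=
  {p : ℕ × ℕ | p.1 ∈ S ∧ p.2 ∈ T ∧ p.1 + p.2 = n}.ncard

lemma finite_of_sum (P : ℕ × ℕ → Prop) (n : ℕ)
    (h : ∀ p, P p → p.1 + p.2 = n) : {p : ℕ × ℕ | P p}.Finite := by
  apply Set.Finite.subset ((Set.finite_Iic n).prod (Set.finite_Iic n))
  rintro ⟨x, y⟩ hp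
  have := h _ hp
  simp only [Set.mem_prod, Set.mem_Iic] at *
  omega

lemma mem_tr {m x : ℕ} {S : Set ℕ} : x ∈ tr m S ↔ ∃ a ∈ S, m + a = x := by
  simp [tr]

lemma R_split (S C : Set ℕ) (h : ∀ s ∈ S, ∀ c ∈ C, s < c) (n : ℕ) :
    R (S ∪ C) n = R S n + R C n + cr S C n := by
  have hdisj : ∀ x, x ∈ S → x ∈ C → False := fun x hs hc => lt_irrefl x (h x hs x hc)
  have hset : {p : ℕ × ℕ | p.1 ∈ S ∪ C ∧ p.2 ∈ S ∪ C ∧ p.1 < p.2 ∧ p.1 + p.2 = n}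
      = ({p : ℕ × ℕ | p.1 ∈ S ∧ p.2 ∈ S ∧ p.1 < p.2 ∧ p.1 + p.2 = n}
        ∪ {p : ℕ × ℕ | p.1 ∈ C ∧ p.2 ∈ C ∧ p.1 < p.2 ∧ p.1 + p.2 = n})
        ∪ {p : ℕ × ℕ | p.1 ∈ S ∧ p.2 ∈ C ∧ p.1 + p.2 = n} := by
    ext ⟨x, y⟩
    simp only [Set.mem_setOf_eq, Set.mem_union]
    constructor
    · rintro ⟨hx | hx, hy | hy, hlt, hsum⟩
      · exact Or.inl (Or.inl ⟨hx, hy, hlt, hsum⟩)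
      · exact Or.inr ⟨hx, hy, hsum⟩
      · exact absurd (h y hy x hx) (by omega)
      · exact Or.inl (Or.inr ⟨hx, hy, hlt, hsum⟩)
    · rintro ((⟨hx, hy, hlt, hsum⟩ | ⟨hx, hy, hlt, hsum⟩) | ⟨hx, hy, hsum⟩)
      · exact ⟨Or.inl hx, Or.inl hy, hlt, hsum⟩
      · exact ⟨Or.inr hx, Or.inr hy, hlt, hsum⟩
      · exact ⟨Or.inl hx, Or.inr hy, h x hx y hy, hsum⟩
  have f1 : {p : ℕ × ℕ | p.1 ∈ S ∧ p.2 ∈ S ∧ p.1 < p.2 ∧ p.1 + p.2 = n}.Finite :=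
    finite_of_sum _ n (fun p hp => hp.2.2.2)
  have f2 : {p : ℕ × ℕ | p.1 ∈ C ∧ p.2 ∈ C ∧ p.1 < p.2 ∧ p.1 + p.2 = n}.Finite :=
    finite_of_sum _ n (fun p hp => hp.2.2.2)
  have f3 : {p : ℕ × ℕ | p.1 ∈ S ∧ p.2 ∈ C ∧ p.1 + p.2 = n}.Finite :=
    finite_of_sum _ n (fun p hp => hp.2.2)
  have d12 : Disjoint {p : ℕ × ℕ | p.1 ∈ S ∧ p.2 ∈ S ∧ p.1 < p.2 ∧ p.1 + p.2 = n}
      {p : ℕ × ℕ | p.1 ∈ C ∧ p.2 ∈ C ∧ p.1 < p.2 ∧ p.1 + p.2 = n} := by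
    rw [Set.disjoint_left]
    rintro ⟨x, y⟩ ⟨hx, _, _, _⟩ ⟨hx', _, _, _⟩
    exact hdisj x hx hx'
  have d3 : Disjoint ({p : ℕ × ℕ | p.1 ∈ S ∧ p.2 ∈ S ∧ p.1 < p.2 ∧ p.1 + p.2 = n}
        ∪ {p : ℕ × ℕ | p.1 ∈ C ∧ p.2 ∈ C ∧ p.1 < p.2 ∧ p.1 + p.2 = n})
      {p : ℕ × ℕ | p.1 ∈ S ∧ p.2 ∈ C ∧ p.1 + p.2 = n} := by
    rw [Set.disjoint_left]
    rintro ⟨x, y⟩ (⟨_, hy, _, _⟩ | ⟨hx, _, _, _⟩) ⟨hx', hy', _⟩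
    · exact hdisj y hy hy'
    · exact hdisj x hx' hx
  rw [R, hset, Set.ncard_union_eq d3 (f1.union f2) f3,
    Set.ncard_union_eq d12 f1 f2]
  rfl

lemma R_tr_add (m : ℕ) (S : Set ℕ) (n : ℕ) : R (tr m S) (n + 2 * m) = R S n := by
  have himg : {p : ℕ × ℕ | p.1 ∈ tr m S ∧ p.2 ∈ tr m S ∧ p.1 < p.2 ∧ p.1 + p.2 = n + 2 * m}
      = (fun p : ℕ × ℕ => (m + p.1, m + p.2)) ''
        {p : ℕ × ℕ | p.1 ∈ S ∧ p.2 ∈ S ∧ p.1 < p.2 ∧ p.1 + p.2 = n} := by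
    ext ⟨x, y⟩
    simp only [Set.mem_setOf_eq, Set.mem_image, mem_tr, Prod.mk.injEq, Prod.exists]
    constructor
    · rintro ⟨⟨a, ha, rfl⟩, ⟨b, hb, rfl⟩, hlt, hsum⟩
      exact ⟨a, b, ⟨ha, hb, by omega, by omega⟩, rfl, rfl⟩
    · rintro ⟨a, b, ⟨ha, hb, hlt, hsum⟩, rfl, rfl⟩
      exact ⟨⟨a, ha, rfl⟩, ⟨b, hb, rfl⟩, by omega, by omega⟩
  have hinj : Function.Injective (fun p : ℕ × ℕ => (m + p.1, m + p.2)) := by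
    rintro ⟨a, b⟩ ⟨c, d⟩ h
    simp only [Prod.mk.injEq] at h
    exact Prod.ext (by omega) (by omega)
  rw [R, himg, Set.ncard_image_of_injective _ hinj]
  rfl

lemma R_tr_lt (m : ℕ) (S : Set ℕ) (n : ℕ) (h : n < 2 * m) : R (tr m S) n = 0 := by
  have : {p : ℕ × ℕ | p.1 ∈ tr m S ∧ p.2 ∈ tr m S ∧ p.1 < p.2 ∧ p.1 + p.2 = n} = ∅ := by
    ext ⟨x, y⟩
    simp only [Set.mem_setOf_eq, mem_tr, Set.mem_empty_iff_false, iff_false, not_and]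
    rintro ⟨a, ha, rfl⟩ ⟨b, hb, rfl⟩ hlt
    omega
  rw [R, this, Set.ncard_empty]

lemma cr_comm (S T : Set ℕ) (n : ℕ) : cr S T n = cr T S n := by
  have : {p : ℕ × ℕ | p.1 ∈ T ∧ p.2 ∈ S ∧ p.1 + p.2 = n}
      = Prod.swap '' {p : ℕ × ℕ | p.1 ∈ S ∧ p.2 ∈ T ∧ p.1 + p.2 = n} := by
    ext ⟨x, y⟩
    simp only [Set.mem_setOf_eq, Set.mem_image, Prod.exists, Prod.swap_prod_mk,
      Prod.mk.injEq]
    constructor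
    · rintro ⟨hx, hy, hs⟩
      exact ⟨y, x, ⟨hy, hx, by omega⟩, rfl, rfl⟩
    · rintro ⟨a, b, ⟨ha, hb, hs⟩, rfl, rfl⟩
      exact ⟨hb, ha, by omega⟩
  rw [cr, cr, this, Set.ncard_image_of_injective _ Prod.swap_injective]

lemma cr_tr_add (m : ℕ) (S T : Set ℕ) (n : ℕ) : cr S (tr m T) (n + m) = cr S T n := by
  have himg : {p : ℕ × ℕ | p.1 ∈ S ∧ p.2 ∈ tr m T ∧ p.1 + p.2 = n + m}
      = (fun p : ℕ × ℕ => (p.1, m + p.2)) ''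
        {p : ℕ × ℕ | p.1 ∈ S ∧ p.2 ∈ T ∧ p.1 + p.2 = n} := by
    ext ⟨x, y⟩
    simp only [Set.mem_setOf_eq, Set.mem_image, mem_tr, Prod.mk.injEq, Prod.exists]
    constructor
    · rintro ⟨hx, ⟨b, hb, rfl⟩, hsum⟩
      exact ⟨x, b, ⟨hx, hb, by omega⟩, rfl, rfl⟩
    · rintro ⟨a, b, ⟨ha, hb, hs⟩, rfl, rfl⟩
      exact ⟨ha, ⟨b, hb, rfl⟩, by omega⟩
  have hinj : Function.Injective (fun p : ℕ × ℕ => (p.1, m + p.2)) := by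
    rintro ⟨a, b⟩ ⟨c, d⟩ h
    simp only [Prod.mk.injEq] at h
    exact Prod.ext h.1 (by omega)
  rw [cr, himg, Set.ncard_image_of_injective _ hinj]
  rfl

lemma cr_tr_lt (m : ℕ) (S T : Set ℕ) (n : ℕ) (h : n < m) : cr S (tr m T) n = 0 := by
  have : {p : ℕ × ℕ | p.1 ∈ S ∧ p.2 ∈ tr m T ∧ p.1 + p.2 = n} = ∅ := by
    ext ⟨x, y⟩
    simp only [Set.mem_setOf_eq, mem_tr, Set.mem_empty_iff_false, iff_false, not_and]
    rintro _ ⟨b, hb, rfl⟩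
    omega
  rw [cr, this, Set.ncard_empty]


lemma key (A B : Set ℕ) (m : ℕ)
    (hAB : ∀ a ∈ A, ∀ b ∈ B, a < m + b) (hBA : ∀ b ∈ B, ∀ a ∈ A, b < m + a)
    (hR : ∀ n, R A n = R B n) (n : ℕ) :
    R (A ∪ tr m B) n = R (B ∪ tr m A) n := by
  have h1 : ∀ a ∈ A, ∀ c ∈ tr m B, a < c := by
    rintro a ha c hc
    obtain ⟨b, hb, rfl⟩ := mem_tr.mp hc
    exact hAB a ha b hb
  have h2 : ∀ b ∈ B, ∀ c ∈ tr m A, b < c := by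
    rintro b hb c hc
    obtain ⟨a, ha, rfl⟩ := mem_tr.mp hc
    exact hBA b hb a ha
  rw [R_split _ _ h1, R_split _ _ h2]
  have e1 : R (tr m B) n = R (tr m A) n := by
    rcases le_or_gt (2 * m) n with h | h
    · obtain ⟨k, rfl⟩ : ∃ k, n = k + 2 * m := ⟨n - 2 * m, by omega⟩
      rw [R_tr_add, R_tr_add, hR]
    · rw [R_tr_lt _ _ _ h, R_tr_lt _ _ _ h]
  have e2 : cr A (tr m B) n = cr B (tr m A) n := by
    rcases le_or_gt m n with h | h
    · obtain ⟨k, rfl⟩ : ∃ k, n = k + m := ⟨n - m, by omega⟩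
      rw [cr_tr_add, cr_tr_add, cr_comm]
    · rw [cr_tr_lt _ _ _ _ h, cr_tr_lt _ _ _ _ h]
  rw [e1, e2, hR]

/-! ### The construction -/

def NN (l : ℕ) : ℕ → ℕ
  | 0 => 2
  | i + 1 => NN l i + (if i = 2 * l - 1 then NN l i - 1 else NN l i)

def mm (l i : ℕ) : ℕ := if i = 2 * l - 1 then NN l i - 1 else NN l i

lemma NN_succ (l i : ℕ) : NN l (i + 1) = NN l i + mm l i := rfl

def AB (l : ℕ) : ℕ → Set ℕ × Set ℕ
  | 0 => ({0}, {1})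
  | i + 1 => ((AB l i).1 ∪ tr (mm l i) (AB l i).2, (AB l i).2 ∪ tr (mm l i) (AB l i).1)

abbrev AA (l i : ℕ) : Set ℕ := (AB l i).1
abbrev BB (l i : ℕ) : Set ℕ := (AB l i).2

lemma AA_zero (l : ℕ) : AA l 0 = {0} := rfl
lemma BB_zero (l : ℕ) : BB l 0 = {1} := rfl
lemma AA_succ (l i : ℕ) : AA l (i + 1) = AA l i ∪ tr (mm l i) (BB l i) := rfl
lemma BB_succ (l i : ℕ) : BB l (i + 1) = BB l i ∪ tr (mm l i) (AA l i) := rfl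

lemma NN_ge_two (l : ℕ) : ∀ i, 2 ≤ NN l i := by
  intro i
  induction i with
  | zero => simp [NN]
  | succ i ih => rw [NN_succ]; omega

lemma mm_pos (l i : ℕ) : 1 ≤ mm l i := by
  have := NN_ge_two l i
  rw [mm]; split <;> omega

lemma mm_le (l i : ℕ) : mm l i ≤ NN l i := by
  rw [mm]; split <;> omega

lemma NN_lin (l : ℕ) : ∀ i, i + 2 ≤ NN l i := by
  intro i
  induction i with
  | zero => simp [NN]
  | succ i ih => have := mm_pos l i; rw [NN_succ]; omega

lemma NN_mono (l : ℕ) {i j : ℕ} (h : i ≤ j) : NN l i ≤ NN l j := by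
  induction j with
  | zero => have : i = 0 := by omega
            rw [this]
  | succ j ih =>
    rcases Nat.lt_or_ge i (j+1) with h' | h'
    · have := ih (by omega); have := mm_pos l j; rw [NN_succ]; omega
    · rw [show i = j + 1 by omega]

lemma NN_pow (l : ℕ) (hl : 1 ≤ l) : ∀ i, i ≤ 2 * l - 1 → NN l i = 2 ^ (i + 1) := by
  intro i
  induction i with
  | zero => intro _; simp [NN]
  | succ i ih =>
    intro hi
    have hne : i ≠ 2 * l - 1 := by omega
    rw [NN_succ, mm, if_neg hne, ih (by omega), pow_succ]
    ring

lemma NN_top (l : ℕ) (hl : 1 ≤ l) : NN l (2 * l) = 2 ^ (2 * l + 1) - 1 := by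
  have hp : NN l (2 * l - 1) = 2 ^ (2 * l) := by
    rw [NN_pow l hl _ le_rfl, show 2 * l - 1 + 1 = 2 * l by omega]
  have key : NN l (2 * l - 1 + 1) = 2 ^ (2 * l) + (2 ^ (2 * l) - 1) := by
    rw [NN_succ, mm, if_pos rfl, hp]
  have h1 : NN l (2 * l) = NN l (2 * l - 1 + 1) := by congr 1; omega
  have hps : 2 ^ (2 * l + 1) = 2 ^ (2 * l) * 2 := pow_succ 2 (2 * l)
  have hpos : 1 ≤ 2 ^ (2 * l) := Nat.one_le_two_pow
  omega

lemma mm_high (l i : ℕ) (hl : 1 ≤ l) (h : 2 * l ≤ i) : mm l i = NN l i := by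
  rw [mm]
  rw [if_neg (show ¬ i = 2 * l - 1 by omega)]

lemma NN_high (l : ℕ) (hl : 1 ≤ l) : ∀ j, NN l (2 * l + j) = 2 ^ j * (2 ^ (2 * l + 1) - 1) := by
  intro j
  induction j with
  | zero => simpa using NN_top l hl
  | succ j ih =>
    rw [show 2 * l + (j + 1) = (2 * l + j) + 1 by omega, NN_succ,
      mm_high l _ hl (by omega), ih, pow_succ]
    ring

lemma sub_Iio (l : ℕ) : ∀ i, AA l i ⊆ Set.Iio (NN l i) ∧ BB l i ⊆ Set.Iio (NN l i) := by
  intro i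
  induction i with
  | zero =>
    constructor <;> (rw [show NN l 0 = 2 from rfl]; intro x hx)
    · rw [AA_zero] at hx; simp at hx; simp [hx]
    · rw [BB_zero] at hx; simp at hx; simp [hx]
  | succ i ih =>
    have hm := mm_le l i
    constructor
    · rw [AA_succ]
      rintro x (hx | hx)
      · have := ih.1 hx; simp only [Set.mem_Iio, NN_succ] at *; omega
      · obtain ⟨b, hb, rfl⟩ := mem_tr.mp hx
        have := ih.2 hb; simp only [Set.mem_Iio, NN_succ] at *; omega
    · rw [BB_succ]
      rintro x (hx | hx)
      · have := ih.2 hx; simp only [Set.mem_Iio, NN_succ] at *; omega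
      · obtain ⟨a, ha, rfl⟩ := mem_tr.mp hx
        have := ih.1 ha; simp only [Set.mem_Iio, NN_succ] at *; omega

lemma zero_mem (l : ℕ) : ∀ i, 0 ∈ AA l i := by
  intro i
  induction i with
  | zero => rw [AA_zero]; rfl
  | succ i ih => rw [AA_succ]; exact Or.inl ih

lemma zero_not_mem (l : ℕ) : ∀ i, 0 ∉ BB l i := by
  intro i
  induction i with
  | zero => rw [BB_zero]; simp
  | succ i ih =>
    rw [BB_succ]
    rintro (h | h)
    · exact ih h
    · obtain ⟨a, _, ha⟩ := mem_tr.mp h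
      have := mm_pos l i
      omega

lemma union_eq (l : ℕ) : ∀ i, AA l i ∪ BB l i = Set.Iio (NN l i) := by
  intro i
  induction i with
  | zero =>
    ext x
    rw [show NN l 0 = 2 from rfl]
    simp only [AA_zero, BB_zero, Set.mem_union, Set.mem_singleton_iff, Set.mem_Iio]
    omega
  | succ i ih =>
    have hm := mm_le l i
    have hm1 := mm_pos l i
    ext x
    simp only [AA_succ, BB_succ, Set.mem_union, mem_tr, Set.mem_Iio, NN_succ]
    constructor
    · rintro ((hx | ⟨b, hb, rfl⟩) | (hx | ⟨a, ha, rfl⟩))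
      · have := (sub_Iio l i).1 hx; simp only [Set.mem_Iio] at this; omega
      · have := (sub_Iio l i).2 hb; simp only [Set.mem_Iio] at this; omega
      · have := (sub_Iio l i).2 hx; simp only [Set.mem_Iio] at this; omega
      · have := (sub_Iio l i).1 ha; simp only [Set.mem_Iio] at this; omega
    · intro hx
      rcases Nat.lt_or_ge x (NN l i) with h' | h'
      · have hx' : x ∈ AA l i ∪ BB l i := by rw [ih]; exact h'
        rcases hx' with h | h
        · exact Or.inl (Or.inl h)
        · exact Or.inr (Or.inl h)
      · have hy : x - mm l i ∈ AA l i ∪ BB l i := by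
          rw [ih]; simp only [Set.mem_Iio]; omega
        rcases hy with h | h
        · exact Or.inr (Or.inr ⟨x - mm l i, h, by omega⟩)
        · exact Or.inl (Or.inr ⟨x - mm l i, h, by omega⟩)

lemma top_mem (l : ℕ) (hl : 1 ≤ l) :
    ∀ i, i ≤ 2 * l - 1 →
      ((NN l i - 1 ∈ AA l i ↔ i % 2 = 1) ∧ (NN l i - 1 ∈ BB l i ↔ i % 2 = 0)) := by
  intro i
  induction i with
  | zero =>
    intro _
    rw [show NN l 0 = 2 from rfl, AA_zero, BB_zero]
    simp
  | succ i ih =>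
    intro hi
    obtain ⟨ihA, ihB⟩ := ih (by omega)
    have hne : i ≠ 2 * l - 1 := by omega
    have hm : mm l i = NN l i := by rw [mm, if_neg hne]
    have hN2 := NN_ge_two l i
    have hNsucc : NN l (i + 1) = NN l i + NN l i := by rw [NN_succ, hm]
    have hAx : NN l (i + 1) - 1 ∉ AA l i := by
      intro h
      have := (sub_Iio l i).1 h
      simp only [Set.mem_Iio] at this
      omega
    have hBx : NN l (i + 1) - 1 ∉ BB l i := by
      intro h
      have := (sub_Iio l i).2 h
      simp only [Set.mem_Iio] at this
      omega
    constructor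
    · rw [AA_succ]
      constructor
      · rintro (h | h)
        · exact absurd h hAx
        · obtain ⟨b, hb, hb'⟩ := mem_tr.mp h
          have hble := (sub_Iio l i).2 hb
          simp only [Set.mem_Iio] at hble
          have : b = NN l i - 1 := by omega
          subst this
          have := ihB.mp hb
          omega
      · intro h
        refine Or.inr (mem_tr.mpr ⟨NN l i - 1, ihB.mpr (by omega), by omega⟩)
    · rw [BB_succ]
      constructor
      · rintro (h | h)
        · exact absurd h hBx
        · obtain ⟨a, ha, ha'⟩ := mem_tr.mp h
          have hale := (sub_Iio l i).1 ha
          simp only [Set.mem_Iio] at hale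
          have : a = NN l i - 1 := by omega
          subst this
          have := ihA.mp ha
          omega
      · intro h
        refine Or.inr (mem_tr.mpr ⟨NN l i - 1, ihA.mpr (by omega), by omega⟩)

lemma disj_low (l : ℕ) (hl : 1 ≤ l) :
    ∀ i, i ≤ 2 * l - 1 → ∀ x, x ∈ AA l i → x ∈ BB l i → False := by
  intro i
  induction i with
  | zero =>
    intro _ x hx hy
    rw [AA_zero] at hx; rw [BB_zero] at hy
    simp at hx hy; omega
  | succ i ih =>
    intro hi x hx hy
    have hne : i ≠ 2 * l - 1 := by omega
    have hm : mm l i = NN l i := by rw [mm, if_neg hne]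
    rw [AA_succ] at hx; rw [BB_succ] at hy
    rcases hx with hx | hx <;> rcases hy with hy | hy
    · exact ih (by omega) x hx hy
    · obtain ⟨a, ha, ha'⟩ := mem_tr.mp hy
      have := (sub_Iio l i).1 hx
      simp only [Set.mem_Iio] at this
      omega
    · obtain ⟨b, hb, hb'⟩ := mem_tr.mp hx
      have := (sub_Iio l i).2 hy
      simp only [Set.mem_Iio] at this
      omega
    · obtain ⟨b, hb, hb'⟩ := mem_tr.mp hx
      obtain ⟨a, ha, ha'⟩ := mem_tr.mp hy
      have : a = b := by omega
      subst this
      exact ih (by omega) a ha hb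

lemma inter_stage (l : ℕ) (hl : 1 ≤ l) :
    ∀ j, AA l (2 * l + j) ∩ BB l (2 * l + j)
      = {x : ℕ | ∃ k < 2 ^ j, x = 2 ^ (2 * l) - 1 + k * (2 ^ (2 * l + 1) - 1)} := by
  have h4 : 4 ≤ 2 ^ (2 * l) := by
    calc (4:ℕ) = 2 ^ 2 := by norm_num
    _ ≤ 2 ^ (2 * l) := Nat.pow_le_pow_right (by norm_num) (by omega)
  intro j
  induction j with
  | zero =>
    have hN : NN l (2 * l - 1) = 2 ^ (2 * l) := by
      rw [NN_pow l hl _ le_rfl]; congr 1; omega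
    have hm : mm l (2 * l - 1) = 2 ^ (2 * l) - 1 := by rw [mm, if_pos rfl, hN]
    have e : 2 * l + 0 = (2 * l - 1) + 1 := by omega
    obtain ⟨htopA, htopB⟩ := top_mem l hl (2 * l - 1) le_rfl
    have hp0 : (2:ℕ) ^ 0 = 1 := pow_zero 2
    ext x
    rw [e, AA_succ, BB_succ]
    simp only [Set.mem_inter_iff, Set.mem_union, mem_tr, Set.mem_setOf_eq]
    constructor
    · rintro ⟨hxA | ⟨b, hb, hb'⟩, hxB | ⟨a, ha, ha'⟩⟩
      · exact absurd hxB (fun h => disj_low l hl _ le_rfl x hxA h)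
      · have h1 := (sub_Iio l (2 * l - 1)).1 hxA
        simp only [Set.mem_Iio] at h1
        have ha0 : a = 0 := by omega
        exact ⟨0, by omega, by omega⟩
      · have h1 := (sub_Iio l (2 * l - 1)).2 hxB
        simp only [Set.mem_Iio] at h1
        have hb0 : b = 0 := by omega
        exact absurd hb (by rw [hb0]; exact zero_not_mem l _)
      · obtain rfl : a = b := by omega
        exact absurd ha (fun h => disj_low l hl _ le_rfl a h hb)
    · rintro ⟨k, hk, rfl⟩
      obtain rfl : k = 0 := by omega
      have hxe : 2 ^ (2 * l) - 1 + 0 * (2 ^ (2 * l + 1) - 1) = NN l (2 * l - 1) - 1 := by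
        rw [hN]; omega
      constructor
      · exact Or.inl (by rw [hxe]; exact htopA.mpr (by omega))
      · exact Or.inr ⟨0, zero_mem l _, by omega⟩
  | succ j ih =>
    have hne : 2 * l + j ≠ 2 * l - 1 := by omega
    have hm : mm l (2 * l + j) = NN l (2 * l + j) := by rw [mm, if_neg hne]
    have hNj : NN l (2 * l + j) = 2 ^ j * (2 ^ (2 * l + 1) - 1) := NN_high l hl j
    have hpj : (2:ℕ) ^ (j + 1) = 2 ^ j * 2 := pow_succ 2 j
    have e : 2 * l + (j + 1) = (2 * l + j) + 1 := by omega
    ext x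
    rw [e, AA_succ, BB_succ]
    simp only [Set.mem_inter_iff, Set.mem_union, mem_tr, Set.mem_setOf_eq]
    constructor
    · rintro ⟨hxA | ⟨b, hb, hb'⟩, hxB | ⟨a, ha, ha'⟩⟩
      · have hx : x ∈ AA l (2 * l + j) ∩ BB l (2 * l + j) := ⟨hxA, hxB⟩
        rw [ih] at hx
        obtain ⟨k, hk, rfl⟩ := hx
        exact ⟨k, by omega, rfl⟩
      · have h1 := (sub_Iio l (2 * l + j)).1 hxA
        simp only [Set.mem_Iio] at h1
        omega
      · have h1 := (sub_Iio l (2 * l + j)).2 hxB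
        simp only [Set.mem_Iio] at h1
        omega
      · obtain rfl : a = b := by omega
        have hx : a ∈ AA l (2 * l + j) ∩ BB l (2 * l + j) := ⟨ha, hb⟩
        rw [ih] at hx
        obtain ⟨k, hk, hkx⟩ := hx
        refine ⟨k + 2 ^ j, by omega, ?_⟩
        have harith : (k + 2 ^ j) * (2 ^ (2 * l + 1) - 1)
            = k * (2 ^ (2 * l + 1) - 1) + 2 ^ j * (2 ^ (2 * l + 1) - 1) := add_mul _ _ _
        omega
    · rintro ⟨k, hk, rfl⟩
      by_cases hklt : k < 2 ^ j
      · have hx : (2 ^ (2 * l) - 1 + k * (2 ^ (2 * l + 1) - 1))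
            ∈ AA l (2 * l + j) ∩ BB l (2 * l + j) := by
          rw [ih]; exact ⟨k, hklt, rfl⟩
        exact ⟨Or.inl hx.1, Or.inl hx.2⟩
      · have hk' : k - 2 ^ j < 2 ^ j := by omega
        have hy : (2 ^ (2 * l) - 1 + (k - 2 ^ j) * (2 ^ (2 * l + 1) - 1))
            ∈ AA l (2 * l + j) ∩ BB l (2 * l + j) := by
          rw [ih]; exact ⟨k - 2 ^ j, hk', rfl⟩
        have harith : k * (2 ^ (2 * l + 1) - 1)
            = (k - 2 ^ j) * (2 ^ (2 * l + 1) - 1) + 2 ^ j * (2 ^ (2 * l + 1) - 1) := by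
          rw [← add_mul]; congr 1; omega
        refine ⟨Or.inr ⟨_, hy.2, ?_⟩, Or.inr ⟨_, hy.1, ?_⟩⟩ <;> omega

lemma AA_mono (l : ℕ) {i j : ℕ} (h : i ≤ j) : AA l i ⊆ AA l j := by
  induction j with
  | zero => rw [show i = 0 by omega]
  | succ j ih =>
    rcases Nat.lt_or_ge i (j + 1) with h' | h'
    · exact (ih (by omega)).trans (by rw [AA_succ]; exact Set.subset_union_left)
    · rw [show i = j + 1 by omega]

lemma BB_mono (l : ℕ) {i j : ℕ} (h : i ≤ j) : BB l i ⊆ BB l j := by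
  induction j with
  | zero => rw [show i = 0 by omega]
  | succ j ih =>
    rcases Nat.lt_or_ge i (j + 1) with h' | h'
    · exact (ih (by omega)).trans (by rw [BB_succ]; exact Set.subset_union_left)
    · rw [show i = j + 1 by omega]

lemma stab (l : ℕ) (hl : 1 ≤ l) {i : ℕ} (h2l : 2 * l ≤ i) :
    ∀ j, i ≤ j → (AA l j ∩ Set.Iio (NN l i) = AA l i ∧ BB l j ∩ Set.Iio (NN l i) = BB l i) := by
  intro j
  induction j with
  | zero =>
    intro hj
    rw [show i = 0 by omega]
    exact ⟨Set.inter_eq_left.mpr (sub_Iio l 0).1, Set.inter_eq_left.mpr (sub_Iio l 0).2⟩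
  | succ j ih =>
    intro hj
    rcases Nat.lt_or_ge i (j + 1) with h' | h'
    · have hij : i ≤ j := by omega
      obtain ⟨ihA, ihB⟩ := ih hij
      have hmj : NN l i ≤ mm l j := by
        rw [mm_high l j hl (by omega)]
        exact NN_mono l hij
      constructor
      · rw [AA_succ, Set.union_inter_distrib_right, ihA]
        have : tr (mm l j) (BB l j) ∩ Set.Iio (NN l i) = ∅ := by
          ext x
          simp only [Set.mem_inter_iff, mem_tr, Set.mem_Iio, Set.mem_empty_iff_false,
            iff_false, not_and]
          rintro ⟨b, hb, rfl⟩
          omega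
        rw [this, Set.union_empty]
      · rw [BB_succ, Set.union_inter_distrib_right, ihB]
        have : tr (mm l j) (AA l j) ∩ Set.Iio (NN l i) = ∅ := by
          ext x
          simp only [Set.mem_inter_iff, mem_tr, Set.mem_Iio, Set.mem_empty_iff_false,
            iff_false, not_and]
          rintro ⟨a, ha, rfl⟩
          omega
        rw [this, Set.union_empty]
    · rw [show i = j + 1 by omega]
      exact ⟨Set.inter_eq_left.mpr (sub_Iio l (j+1)).1,
        Set.inter_eq_left.mpr (sub_Iio l (j+1)).2⟩

lemma R_stage (l : ℕ) (hl : 1 ≤ l) : ∀ i n, R (AA l i) n = R (BB l i) n := by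
  intro i
  induction i with
  | zero =>
    intro n
    have hA : {p : ℕ × ℕ | p.1 ∈ AA l 0 ∧ p.2 ∈ AA l 0 ∧ p.1 < p.2 ∧ p.1 + p.2 = n} = ∅ := by
      ext ⟨x, y⟩
      simp only [AA_zero, Set.mem_setOf_eq, Set.mem_singleton_iff, Set.mem_empty_iff_false,
        iff_false, not_and]
      rintro rfl rfl
      omega
    have hB : {p : ℕ × ℕ | p.1 ∈ BB l 0 ∧ p.2 ∈ BB l 0 ∧ p.1 < p.2 ∧ p.1 + p.2 = n} = ∅ := by
      ext ⟨x, y⟩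
      simp only [BB_zero, Set.mem_setOf_eq, Set.mem_singleton_iff, Set.mem_empty_iff_false,
        iff_false, not_and]
      rintro rfl rfl
      omega
    rw [R, R, hA, hB]
  | succ i ih =>
    intro n
    rw [AA_succ, BB_succ]
    apply key _ _ _ _ _ ih
    · -- ∀ a ∈ AA l i, ∀ b ∈ BB l i, a < mm l i + b
      intro a ha b hb
      have haN := (sub_Iio l i).1 ha
      simp only [Set.mem_Iio] at haN
      by_cases hc : i = 2 * l - 1
      · have hb0 : b ≠ 0 := fun h => zero_not_mem l i (h ▸ hb)
        have hmN : mm l i = NN l i - 1 := by rw [mm, if_pos hc]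
        have := NN_ge_two l i
        omega
      · have hmN : mm l i = NN l i := by rw [mm, if_neg hc]
        omega
    · -- ∀ b ∈ BB l i, ∀ a ∈ AA l i, b < mm l i + a
      intro b hb a ha
      have hbN := (sub_Iio l i).2 hb
      simp only [Set.mem_Iio] at hbN
      by_cases hc : i = 2 * l - 1
      · have htopB := (top_mem l hl i (by omega)).2
        have hbne : b ≠ NN l i - 1 := by
          intro h
          have := htopB.mp (h ▸ hb)
          omega
        have hmN : mm l i = NN l i - 1 := by rw [mm, if_pos hc]
        have := NN_ge_two l i
        omega
      · have hmN : mm l i = NN l i := by rw [mm, if_neg hc]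
        omega

lemma R_congr (S T : Set ℕ) (n : ℕ) (h : ∀ x, x ≤ n → (x ∈ S ↔ x ∈ T)) : R S n = R T n := by
  have : {p : ℕ × ℕ | p.1 ∈ S ∧ p.2 ∈ S ∧ p.1 < p.2 ∧ p.1 + p.2 = n}
      = {p : ℕ × ℕ | p.1 ∈ T ∧ p.2 ∈ T ∧ p.1 < p.2 ∧ p.1 + p.2 = n} := by
    ext ⟨x, y⟩
    simp only [Set.mem_setOf_eq]
    constructor
    · rintro ⟨hx, hy, hlt, hsum⟩
      exact ⟨(h x (by omega)).mp hx, (h y (by omega)).mp hy, hlt, hsum⟩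
    · rintro ⟨hx, hy, hlt, hsum⟩
      exact ⟨(h x (by omega)).mpr hx, (h y (by omega)).mpr hy, hlt, hsum⟩
  rw [R, this]
  rfl

end Stmt14

open Stmt14

theorem stmt_14 (l : ℕ) (hl : 1 ≤ l) :
    ∃ A B : Set ℕ, R A = R B ∧ A ∪ B = Set.univ ∧
      A ∩ B = {x : ℕ | ∃ k : ℕ, x = 2 ^ (2 * l) - 1 + k * (2 ^ (2 * l + 1) - 1)} ∧
      A ≠ B ∧ (symmDiff A B).Infinite ∧ (A ∩ B).Infinite := by
  have hunion : (⋃ i, AA l i) ∪ (⋃ i, BB l i) = Set.univ := by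
    ext x
    simp only [Set.mem_union, Set.mem_iUnion, Set.mem_univ, iff_true]
    have hx : x ∈ AA l x ∪ BB l x := by
      rw [union_eq l x]
      simp only [Set.mem_Iio]
      have := NN_lin l x
      omega
    rcases hx with h | h
    · exact Or.inl ⟨x, h⟩
    · exact Or.inr ⟨x, h⟩
  have hinter : (⋃ i, AA l i) ∩ (⋃ i, BB l i)
      = {x : ℕ | ∃ k : ℕ, x = 2 ^ (2 * l) - 1 + k * (2 ^ (2 * l + 1) - 1)} := by
    ext x
    simp only [Set.mem_inter_iff, Set.mem_iUnion, Set.mem_setOf_eq]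
    constructor
    · rintro ⟨⟨i, hiA⟩, ⟨i', hiB⟩⟩
      set j := max i i' with hj
      have hxA : x ∈ AA l (2 * l + j) := AA_mono l (by omega) hiA
      have hxB : x ∈ BB l (2 * l + j) := BB_mono l (by omega) hiB
      have hx : x ∈ AA l (2 * l + j) ∩ BB l (2 * l + j) := ⟨hxA, hxB⟩
      rw [inter_stage l hl j] at hx
      obtain ⟨k, _, rfl⟩ := hx
      exact ⟨k, rfl⟩
    · rintro ⟨k, rfl⟩
      have hk : k < 2 ^ k := Nat.lt_two_pow_self
      have hx : (2 ^ (2 * l) - 1 + k * (2 ^ (2 * l + 1) - 1))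
          ∈ AA l (2 * l + k) ∩ BB l (2 * l + k) := by
        rw [inter_stage l hl k]
        exact ⟨k, hk, rfl⟩
      exact ⟨⟨2 * l + k, hx.1⟩, ⟨2 * l + k, hx.2⟩⟩
  have hcs : 2 ^ (2 * l) - 1 < 2 ^ (2 * l + 1) - 1 := by
    have h1 : (2:ℕ) ^ (2 * l) < 2 ^ (2 * l + 1) :=
      Nat.pow_lt_pow_right (by norm_num) (by omega)
    have h2 : 1 ≤ (2:ℕ) ^ (2 * l) := Nat.one_le_two_pow
    omega
  have hc3 : 3 ≤ 2 ^ (2 * l) - 1 := by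
    have : (2:ℕ) ^ 2 ≤ 2 ^ (2 * l) := Nat.pow_le_pow_right (by norm_num) (by omega)
    omega
  refine ⟨⋃ i, AA l i, ⋃ i, BB l i, ?_, hunion, hinter, ?_, ?_, ?_⟩
  · -- R equality
    funext n
    set i := 2 * l + n with hi
    have h2l : 2 * l ≤ i := by omega
    have hn : n < NN l i := by have := NN_lin l i; omega
    have hA : ∀ x, x ≤ n → (x ∈ ⋃ i, AA l i ↔ x ∈ AA l i) := by
      intro x hx
      constructor
      · intro hmem
        obtain ⟨s, ⟨j, rfl⟩, hj⟩ := hmem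
        have h1 : x ∈ AA l (max i j) := AA_mono l (le_max_right i j) hj
        have h2 : x ∈ AA l (max i j) ∩ Set.Iio (NN l i) :=
          ⟨h1, by simp only [Set.mem_Iio]; omega⟩
        rw [(stab l hl h2l (max i j) (le_max_left i j)).1] at h2
        exact h2
      · intro hmem
        exact Set.mem_iUnion.mpr ⟨i, hmem⟩
    have hB : ∀ x, x ≤ n → (x ∈ ⋃ i, BB l i ↔ x ∈ BB l i) := by
      intro x hx
      constructor
      · intro hmem
        obtain ⟨s, ⟨j, rfl⟩, hj⟩ := hmem
        have h1 : x ∈ BB l (max i j) := BB_mono l (le_max_right i j) hj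
        have h2 : x ∈ BB l (max i j) ∩ Set.Iio (NN l i) :=
          ⟨h1, by simp only [Set.mem_Iio]; omega⟩
        rw [(stab l hl h2l (max i j) (le_max_left i j)).2] at h2
        exact h2
      · intro hmem
        exact Set.mem_iUnion.mpr ⟨i, hmem⟩
    calc R (⋃ i, AA l i) n = R (AA l i) n := R_congr _ _ n hA
    _ = R (BB l i) n := R_stage l hl i n
    _ = R (⋃ i, BB l i) n := (R_congr _ _ n hB).symm
  · -- A ≠ B
    intro h
    have h0A : (0:ℕ) ∈ ⋃ i, AA l i := Set.mem_iUnion.mpr ⟨0, zero_mem l 0⟩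
    rw [h] at h0A
    obtain ⟨s, ⟨j, rfl⟩, hj⟩ := h0A
    exact zero_not_mem l j hj
  · -- symmDiff infinite
    apply Set.infinite_of_injective_forall_mem
      (f := fun k : ℕ => (k + 1) * (2 ^ (2 * l + 1) - 1))
    · intro a b hab
      simp only at hab
      have := Nat.eq_of_mul_eq_mul_right (show 0 < 2 ^ (2 * l + 1) - 1 by omega) hab
      omega
    · intro k
      have hmem : (k + 1) * (2 ^ (2 * l + 1) - 1) ∈ (⋃ i, AA l i) ∪ (⋃ i, BB l i) := by
        rw [hunion]; trivial
      have hni : (k + 1) * (2 ^ (2 * l + 1) - 1) ∉ (⋃ i, AA l i) ∩ (⋃ i, BB l i) := by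
        rw [hinter]
        rintro ⟨k', hk'⟩
        rcases Nat.lt_or_ge k' (k + 1) with h' | h'
        · have h1 : k' * (2 ^ (2 * l + 1) - 1) ≤ k * (2 ^ (2 * l + 1) - 1) :=
            Nat.mul_le_mul_right _ (by omega)
          have h2 : (k + 1) * (2 ^ (2 * l + 1) - 1)
              = k * (2 ^ (2 * l + 1) - 1) + (2 ^ (2 * l + 1) - 1) := by ring
          omega
        · have h1 : (k + 1) * (2 ^ (2 * l + 1) - 1) ≤ k' * (2 ^ (2 * l + 1) - 1) :=
            Nat.mul_le_mul_right _ (by omega)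
          omega
      rw [Set.mem_symmDiff]
      rcases hmem with h | h
      · exact Or.inl ⟨h, fun hb => hni ⟨h, hb⟩⟩
      · exact Or.inr ⟨h, fun ha => hni ⟨ha, h⟩⟩
  · -- intersection infinite
    apply Set.infinite_of_injective_forall_mem
      (f := fun k : ℕ => 2 ^ (2 * l) - 1 + k * (2 ^ (2 * l + 1) - 1))
    · intro a b hab
      simp only at hab
      have h1 : a * (2 ^ (2 * l + 1) - 1) = b * (2 ^ (2 * l + 1) - 1) := by omega
      have := Nat.eq_of_mul_eq_mul_right (show 0 < 2 ^ (2 * l + 1) - 1 by omega) h1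
      omega
    · intro k
      rw [hinter]
      exact ⟨k, rfl⟩
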